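/- Let f be the linear involution of Λ(V*) defined as follows: f is the identity on scalars and on V*, and for q ≥ 2 every ω ∈ Λ^q(V*) has a unique decomposition ω = e¹ ∧ ξ + e² ∧ η + ζ with ξ ∈ Λ^{q−1}(span(e², e³, …)), η ∈ Λ^{q−1}(span(e³, e⁴, …)), ζ ∈ Λ^q(span(e³, e⁴, …)), and one sets f(ω) := e¹ ∧ ξ + e² ∧ (η + D₁ξ) + ζ. Then for all ω ∈ Λ(V*) one has f(d₀ω) = d₂(fω) and f(d₂ω) = d₀(fω); consequently f maps d₀-cocycles bijectively onto d₂-cocycles and d₀-coboundaries bijectively onto d₂-coboundaries. -/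

import Mathlib

set_option maxSynthPendingDepth 3

/-- The field `ℤ₂ = ℤ/2ℤ`. -/
abbrev K2 : Type := ZMod 2

/-- The exterior algebra over `ℤ₂` on generators `e 1, e 2, …`, realized as the free
`ℤ₂`-module on the square-free monomials `e^S`, indexed by finite sets `S` of indices
(over `ℤ₂` all signs are trivial). -/
abbrev Lam : Type := Finset ℕ →₀ K2

/-- The generator `eⁱ` (the `i`-th dual basis vector). -/
noncomputable def e (i : ℕ) : Lam := Finsupp.single {i} 1

/-- The wedge product: on monomials, `e^S ∧ e^T = e^(S ∪ T)` if `S` and `T` are disjoint and `0`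
otherwise (there are no signs over `ℤ₂`); extended bilinearly. -/
noncomputable def wedge (x y : Lam) : Lam :=
  x.sum fun S a => y.sum fun T b =>
    if Disjoint S T then Finsupp.single (S ∪ T) (a * b) else 0

/-- A derivation of the exterior algebra (over `ℤ₂` all signs are trivial, so the relevant
operators are ordinary derivations). -/
def IsDerivation (D : Module.End K2 Lam) : Prop :=
  ∀ x y : Lam, D (wedge x y) = wedge (D x) y + wedge x (D y)

/-- The subalgebra `Λ(span (eⁱ : i ∈ I))` of the exterior algebra: the span of the monomials
`e^S` with all indices in `I`. -/
noncomputable def lamOn (I : Set ℕ) : Submodule K2 Lam :=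
  Submodule.span K2 {x | ∃ S : Finset ℕ, ↑S ⊆ I ∧ x = Finsupp.single S (1 : K2)}

/-- `Λ^q`: the span of the monomials of rank `q` with indices in `I`. -/
noncomputable def rankPiece (I : Set ℕ) (q : ℕ) : Submodule K2 Lam :=
  Submodule.span K2
    {x | ∃ S : Finset ℕ, ↑S ⊆ I ∧ S.card = q ∧ x = Finsupp.single S (1 : K2)}

/-- `Λ^q_k`: the span of the monomials of rank `q` and degree (weight) `k`, indices in `I`. -/
noncomputable def gradedPiece (I : Set ℕ) (q k : ℕ) : Submodule K2 Lam :=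
  Submodule.span K2
    {x | ∃ S : Finset ℕ, ↑S ⊆ I ∧ S.card = q ∧ S.sum id = k ∧ x = Finsupp.single S (1 : K2)}

/-- The cohomology class in `Z ⧸ (B ∩ Z)` of a cocycle `x ∈ Z` (defined to be `0` if `x ∉ Z`). -/
noncomputable def cls (Z B : Submodule K2 Lam) (x : Lam) :
    ↥Z ⧸ Submodule.comap Z.subtype B := by
  classical exact if hx : x ∈ Z then Submodule.Quotient.mk ⟨x, hx⟩ else 0

/-- `F(ω, eⁱ) = Σ_{l ≥ 0} (Dˡ ω) ∧ e^{i+1+l}`, truncated at `l < N`; as soon as `D^N ω = 0`,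
this is the full (finite) sum. -/
noncomputable def Ftrunc (D : Module.End K2 Lam) (N : ℕ) (ω : Lam) (i : ℕ) : Lam :=
  ∑ l ∈ Finset.range N, wedge ((D ^ l) ω) (e (i + 1 + l))

/-- The largest index `i_q` of a monomial `e^S`, `S = {i₁ < … < i_q}`. -/
def maxIdx (S : Finset ℕ) : ℕ := S.sup id

/-- `F(e^S, eⁱ)` for a monomial `e^S`: since `D` lowers the degree by one, truncating the sum
at the degree of `e^S` already yields the full sum `Σ_{l ≥ 0} (Dˡ e^S) ∧ e^{i+1+l}`. -/
noncomputable def Fmono (D : Module.End K2 Lam) (S : Finset ℕ) (i : ℕ) : Lam :=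
  Ftrunc D (S.sum id + 1) (Finsupp.single S 1) i

/-- `F(eⁱ, eⁱ) = eⁱ ∧ e^{i+1} + e^{i−1} ∧ e^{i+2} + ⋯ + e² ∧ e^{2i−1}`. -/
noncomputable def F1 (i : ℕ) : Lam :=
  ∑ l ∈ Finset.range (i - 1), wedge (e (i - l)) (e (i + 1 + l))


/-! ### Auxiliary lemmas -/

section Aux

open Finsupp

lemma lam_add_self (v : Lam) : v + v = 0 := by
  have : ((2 : K2)) • v = v + v := two_smul _ v
  rw [show (2 : K2) = 0 by decide, zero_smul] at this
  exact this.symm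

lemma wedge_single (S T : Finset ℕ) (a b : K2) :
    wedge (Finsupp.single S a) (Finsupp.single T b)
      = if Disjoint S T then Finsupp.single (S ∪ T) (a * b) else 0 := by
  unfold wedge
  rw [Finsupp.sum_single_index, Finsupp.sum_single_index] <;> simp

lemma wedge_zero_left (y : Lam) : wedge 0 y = 0 := by simp [wedge]

lemma wedge_zero_right (x : Lam) : wedge x 0 = 0 := by simp [wedge]

lemma wedge_add_right (x y z : Lam) : wedge x (y + z) = wedge x y + wedge x z := by
  unfold wedge
  rw [← Finsupp.sum_add]
  apply Finsupp.sum_congr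
  intro S _
  apply Finsupp.sum_add_index' <;> intro _ <;> intros <;>
    simp [mul_add, Finsupp.single_add, ite_add_ite]

lemma wedge_add_left (x y z : Lam) : wedge (x + y) z = wedge x z + wedge y z := by
  unfold wedge
  apply Finsupp.sum_add_index'
  · intro S; simp
  · intro S a b
    rw [← Finsupp.sum_add]
    exact Finsupp.sum_congr fun T _ => by
      split_ifs <;> simp [add_mul, Finsupp.single_add]

lemma wedge_comm (x y : Lam) : wedge x y = wedge y x := by
  induction x using Finsupp.induction_linear with
  | zero => simp [wedge_zero_left, wedge_zero_right]
  | add f g hf hg => rw [wedge_add_left, wedge_add_right, hf, hg]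
  | single S a =>
    induction y using Finsupp.induction_linear with
    | zero => simp [wedge_zero_left, wedge_zero_right]
    | add f g hf hg => rw [wedge_add_left, wedge_add_right, hf, hg]
    | single T b =>
      rw [wedge_single, wedge_single, Finset.union_comm, mul_comm]
      congr 1
      exact propext disjoint_comm

lemma wedge_assoc (x y z : Lam) : wedge (wedge x y) z = wedge x (wedge y z) := by
  induction x using Finsupp.induction_linear with
  | zero => simp [wedge_zero_left]
  | add f g hf hg => rw [wedge_add_left, wedge_add_left, wedge_add_left, hf, hg]
  | single S a =>
    induction y using Finsupp.induction_linear with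
    | zero => simp [wedge_zero_left, wedge_zero_right]
    | add f g hf hg =>
        rw [wedge_add_right, wedge_add_left, wedge_add_left, wedge_add_right, hf, hg]
    | single T b =>
      induction z using Finsupp.induction_linear with
      | zero => simp [wedge_zero_right]
      | add f g hf hg =>
          rw [wedge_add_right, wedge_add_right, wedge_add_right, hf, hg]
      | single U c =>
        rw [wedge_single, wedge_single]
        by_cases h1 : Disjoint S T
        · by_cases h2 : Disjoint T U
          · simp only [h1, h2, if_true, wedge_single, Finset.disjoint_union_left,
              Finset.disjoint_union_right]
            by_cases h3 : Disjoint S U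
            · simp [h1, h2, h3, Finset.union_assoc, mul_assoc]
            · simp [h1, h2, h3]
          · simp only [h1, h2, if_true, if_false, wedge_zero_right, wedge_single,
              Finset.disjoint_union_left]
            rw [if_neg fun h4 => h4.2.elim]
        · by_cases h2 : Disjoint T U
          · simp only [h1, h2, if_false, if_true, wedge_zero_left, wedge_single,
              Finset.disjoint_union_right]
            rw [if_neg fun h4 => h4.1.elim]
          · simp [h1, h2, wedge_zero_left, wedge_zero_right]

lemma one_wedge (x : Lam) : wedge (Finsupp.single ∅ (1 : K2)) x = x := by
  unfold wedge
  rw [Finsupp.sum_single_index]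
  · simp
  · simp

lemma wedge_one (x : Lam) : wedge x (Finsupp.single ∅ (1 : K2)) = x := by
  rw [wedge_comm]; exact one_wedge x

lemma k2_cases (c : K2) : c = 0 ∨ c = 1 := by revert c; decide

/-- Induction principle for membership in `lamOn I`. -/
lemma lamOn_induction {I : Set ℕ} {P : Lam → Prop} (h0 : P 0)
    (hadd : ∀ x y, P x → P y → P (x + y))
    (hmono : ∀ S : Finset ℕ, ↑S ⊆ I → P (Finsupp.single S (1 : K2))) :
    ∀ x ∈ lamOn I, P x := by
  intro x hx
  refine Submodule.span_induction (p := fun x _ => P x) ?_ h0 (fun a b _ _ ha hb => hadd a b ha hb) ?_ hx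
  · rintro y ⟨S, hS, rfl⟩
    exact hmono S hS
  · intro c y _ hy
    rcases k2_cases c with rfl | rfl
    · simpa using h0
    · simpa using hy

lemma single_mem_lamOn {I : Set ℕ} {S : Finset ℕ} (hS : ↑S ⊆ I) :
    Finsupp.single S (1 : K2) ∈ lamOn I :=
  Submodule.subset_span ⟨S, hS, rfl⟩

lemma e_mem_lamOn {I : Set ℕ} {i : ℕ} (hi : i ∈ I) : e i ∈ lamOn I :=
  single_mem_lamOn (by simpa using hi)

lemma wedge_mem_lamOn {I : Set ℕ} {x y : Lam} (hx : x ∈ lamOn I) (hy : y ∈ lamOn I) :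
    wedge x y ∈ lamOn I := by
  revert y
  have := lamOn_induction (P := fun x => ∀ y ∈ lamOn I, wedge x y ∈ lamOn I) ?_ ?_ ?_ x hx
  · exact fun {y} => this y

  · intro y _; rw [wedge_zero_left]; exact Submodule.zero_mem _
  · intro a b ha hb y hy; rw [wedge_add_left]; exact Submodule.add_mem _ (ha y hy) (hb y hy)
  · intro S hS y hy
    refine lamOn_induction (P := fun y => wedge (Finsupp.single S 1) y ∈ lamOn I) ?_ ?_ ?_ y hy
    · simp only [wedge_zero_right]; exact Submodule.zero_mem _
    · intro a b ha hb; simp only [wedge_add_right]; exact Submodule.add_mem _ ha hb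
    · intro T hT
      rw [wedge_single]
      split_ifs
      · exact single_mem_lamOn (by rw [Finset.coe_union]; exact Set.union_subset hS hT)
      · exact Submodule.zero_mem _

lemma add_cancel_mid (a b c : Lam) : a + b + (b + c) = a + c := by
  have h : a + b + (b + c) = a + (b + b) + c := by abel
  rw [h, lam_add_self, add_zero]

lemma single_insert {i : ℕ} {S : Finset ℕ} (hi : i ∉ S) :
    Finsupp.single (insert i S) (1 : K2) = wedge (e i) (Finsupp.single S 1) := by
  rw [e, wedge_single, if_pos (Finset.disjoint_singleton_left.2 hi), one_mul, ← Finset.insert_eq]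

lemma wedge_e_single (i : ℕ) (T : Finset ℕ) (b : K2) :
    wedge (e i) (Finsupp.single T b)
      = if i ∈ T then 0 else Finsupp.single (insert i T) b := by
  rw [e, wedge_single, ← Finset.insert_eq, one_mul]
  by_cases h : i ∈ T
  · rw [if_neg (by simpa using h), if_pos h]
  · rw [if_pos (Finset.disjoint_singleton_left.2 h), if_neg h]

lemma wedge_e_self (i : ℕ) (z : Lam) : wedge (e i) (wedge (e i) z) = 0 := by
  rw [← wedge_assoc, e, wedge_single, if_neg (by simp), wedge_zero_left]

lemma wedge_left_comm (a b c : Lam) : wedge a (wedge b c) = wedge b (wedge a c) := by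
  rw [← wedge_assoc, wedge_comm a b, wedge_assoc]

/-- The contraction with `e 1`. -/
noncomputable def iotaF (x : Lam) : Lam :=
  x.sum fun S a => if (1 : ℕ) ∈ S then Finsupp.single (S.erase 1) a else 0

lemma iota_single (S : Finset ℕ) (a : K2) :
    iotaF (Finsupp.single S a)
      = if (1 : ℕ) ∈ S then Finsupp.single (S.erase 1) a else 0 := by
  unfold iotaF
  rw [Finsupp.sum_single_index]
  split_ifs <;> simp

lemma iota_zero : iotaF 0 = 0 := by simp [iotaF]

lemma iota_add (x y : Lam) : iotaF (x + y) = iotaF x + iotaF y := by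
  unfold iotaF
  apply Finsupp.sum_add_index' <;> intro S <;> intros <;>
    split_ifs <;> simp [Finsupp.single_add]

lemma iota_wedge_e1 (z : Lam) : iotaF (wedge (e 1) z) = z + wedge (e 1) (iotaF z) := by
  induction z using Finsupp.induction_linear with
  | zero => simp [wedge_zero_right, iota_zero]
  | add f g hf hg =>
      rw [wedge_add_right, iota_add, hf, hg, iota_add, wedge_add_right]
      abel
  | single T b =>
    rw [wedge_e_single, iota_single]
    by_cases h1 : (1 : ℕ) ∈ T
    · rw [if_pos h1, if_pos h1, iota_zero, wedge_e_single,
        if_neg (Finset.notMem_erase 1 T), Finset.insert_erase h1, lam_add_self]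
    · rw [if_neg h1, if_neg h1, iota_single, if_pos (Finset.mem_insert_self 1 T),
        Finset.erase_insert h1, wedge_zero_right, add_zero]

lemma iota_wedge_ne {j : ℕ} (hj : j ≠ 1) (z : Lam) :
    iotaF (wedge (e j) z) = wedge (e j) (iotaF z) := by
  induction z using Finsupp.induction_linear with
  | zero => simp [wedge_zero_right, iota_zero]
  | add f g hf hg => rw [wedge_add_right, iota_add, hf, hg, iota_add, wedge_add_right]
  | single T b =>
    rw [wedge_e_single, iota_single]
    by_cases hjT : j ∈ T
    · rw [if_pos hjT, iota_zero]
      by_cases h1 : (1 : ℕ) ∈ T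
      · rw [if_pos h1, wedge_e_single, if_pos (Finset.mem_erase.2 ⟨hj, hjT⟩)]
      · rw [if_neg h1, wedge_zero_right]
    · rw [if_neg hjT, iota_single]
      by_cases h1 : (1 : ℕ) ∈ T
      · rw [if_pos (Finset.mem_insert_of_mem h1), if_pos h1, wedge_e_single,
          if_neg (fun hc => hjT (Finset.mem_of_mem_erase hc)),
          Finset.erase_insert_of_ne hj]
      · rw [if_neg (by simp [Finset.mem_insert, h1, Ne.symm hj]), if_neg h1, wedge_zero_right]

lemma iota_memOn {I : Set ℕ} : ∀ x ∈ lamOn I, iotaF x ∈ lamOn I := by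
  refine lamOn_induction ?_ ?_ ?_
  · rw [iota_zero]; exact Submodule.zero_mem _
  · intro x y hx hy; rw [iota_add]; exact Submodule.add_mem _ hx hy
  · intro S hS
    rw [iota_single]
    split_ifs
    · exact single_mem_lamOn ((Finset.coe_subset.2 (Finset.erase_subset 1 S)).trans hS)
    · exact Submodule.zero_mem _

lemma eq_zero_of_self_eq_add_self {a : Lam} (h : a = a + a) : a = 0 :=
  h.trans (lam_add_self a)

lemma lamDeriv_unit {D : Lam → Lam}
    (hder : ∀ x y, D (wedge x y) = wedge (D x) y + wedge x (D y)) :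
    D (Finsupp.single ∅ (1 : K2)) = 0 := by
  have h := hder (Finsupp.single ∅ (1 : K2)) (Finsupp.single ∅ (1 : K2))
  rw [one_wedge, wedge_one, one_wedge] at h
  exact eq_zero_of_self_eq_add_self h

lemma add_zero_of_add {D : Lam → Lam} (hadd : ∀ x y, D (x + y) = D x + D y) :
    D 0 = 0 := by
  have h := hadd 0 0
  rw [add_zero] at h
  exact eq_zero_of_self_eq_add_self h

lemma lamDeriv_eqOn {D D' : Lam → Lam}
    (hadd : ∀ x y, D (x + y) = D x + D y) (hadd' : ∀ x y, D' (x + y) = D' x + D' y)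
    (hder : ∀ x y, D (wedge x y) = wedge (D x) y + wedge x (D y))
    (hder' : ∀ x y, D' (wedge x y) = wedge (D' x) y + wedge x (D' y))
    {I : Set ℕ} (he : ∀ i ∈ I, D (e i) = D' (e i)) :
    ∀ x ∈ lamOn I, D x = D' x := by
  refine lamOn_induction ?_ ?_ ?_
  · rw [add_zero_of_add hadd, add_zero_of_add hadd']
  · intro x y hx hy; rw [hadd, hadd', hx, hy]
  · intro S hS
    revert hS
    induction S using Finset.induction_on with
    | empty => intro _; rw [lamDeriv_unit hder, lamDeriv_unit hder']
    | @insert i S hi ih =>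
      intro hSI
      have hiI : i ∈ I := hSI (by simp)
      have hSI' : ↑S ⊆ I := fun a ha => hSI (by simp [ha])
      rw [single_insert hi, hder, hder', he i hiI, ih hSI']

lemma lamDeriv_memOn {D : Lam → Lam}
    (hadd : ∀ x y, D (x + y) = D x + D y)
    (hder : ∀ x y, D (wedge x y) = wedge (D x) y + wedge x (D y))
    {I : Set ℕ} (he : ∀ i ∈ I, D (e i) ∈ lamOn I) :
    ∀ x ∈ lamOn I, D x ∈ lamOn I := by
  refine lamOn_induction ?_ ?_ ?_
  · rw [add_zero_of_add hadd]; exact Submodule.zero_mem _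
  · intro x y hx hy; rw [hadd]; exact Submodule.add_mem _ hx hy
  · intro S hS
    revert hS
    induction S using Finset.induction_on with
    | empty => intro _; rw [lamDeriv_unit hder]; exact Submodule.zero_mem _
    | @insert i S hi ih =>
      intro hSI
      have hiI : i ∈ I := hSI (by simp)
      have hSI' : ↑S ⊆ I := fun a ha => hSI (by simp [ha])
      rw [single_insert hi, hder]
      exact Submodule.add_mem _
        (wedge_mem_lamOn (he i hiI) (single_mem_lamOn hSI'))
        (wedge_mem_lamOn (e_mem_lamOn hiI) (ih hSI'))

lemma wedge_e_e_self (i : ℕ) : wedge (e i) (e i) = 0 := by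
  rw [e, wedge_single, if_neg (by simp)]

lemma der_add {g h : Lam → Lam}
    (hg : ∀ x y, g (wedge x y) = wedge (g x) y + wedge x (g y))
    (hh : ∀ x y, h (wedge x y) = wedge (h x) y + wedge x (h y)) (x y : Lam) :
    g (wedge x y) + h (wedge x y) = wedge (g x + h x) y + wedge x (g y + h y) := by
  rw [hg, hh, wedge_add_left, wedge_add_right]; abel

lemma der_wedge_comp {j : ℕ} {g : Lam → Lam}
    (hg : ∀ x y, g (wedge x y) = wedge (g x) y + wedge x (g y)) (x y : Lam) :
    wedge (e j) (g (wedge x y))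
      = wedge (wedge (e j) (g x)) y + wedge x (wedge (e j) (g y)) := by
  rw [hg, wedge_add_right]
  congr 1
  · exact (wedge_assoc _ _ _).symm
  · exact wedge_left_comm _ _ _

end Aux
/-- Proposition: let `d0` and `d2` be the Chevalley–Eilenberg differentials of `𝔪₀` and `𝔪₂`
on `Λ(V*) = Λ(e¹, e², …)`, let `D1` be the unique derivation with `D1 e¹ = D1 e² = 0`,
`D1 eⁱ = e^{i−1}` for `i > 2`, and let `f` be the linear involution which is the identity on
scalars and on `V*` and which sends `e¹ ∧ ξ + e² ∧ η + ζ` to `e¹ ∧ ξ + e² ∧ (η + D1 ξ) + ζ`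
for `ξ ∈ Λ(e²,e³,…)` and `η, ζ ∈ Λ(e³,e⁴,…)` (this uniquely determines the linear map `f` on
`Λ(V*)`, by the uniqueness of the decomposition; the stated rule also forces `f` to be the
identity on scalars and on `V*`). Then `f ∘ d0 = d2 ∘ f` and `f ∘ d2 = d0 ∘ f` on `Λ(V*)`;
consequently `f` maps the `d0`-cocycles bijectively onto the `d2`-cocycles and the
`d0`-coboundaries bijectively onto the `d2`-coboundaries. -/
theorem interweaving_map_f
    (d0 d2 D1 f : Module.End K2 Lam)
    (hd0 : IsDerivation d0) (h01 : d0 (e 1) = 0) (h02 : d0 (e 2) = 0)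
    (h0i : ∀ i, 3 ≤ i → d0 (e i) = wedge (e 1) (e (i - 1)))
    (hd2 : IsDerivation d2) (h21 : d2 (e 1) = 0) (h22 : d2 (e 2) = 0)
    (h23 : d2 (e 3) = wedge (e 1) (e 2)) (h24 : d2 (e 4) = wedge (e 1) (e 3))
    (h2i : ∀ i, 5 ≤ i → d2 (e i) = wedge (e 1) (e (i - 1)) + wedge (e 2) (e (i - 2)))
    (hD : IsDerivation D1) (hD1 : D1 (e 1) = 0) (hD2 : D1 (e 2) = 0)
    (hDi : ∀ i, 3 ≤ i → D1 (e i) = e (i - 1))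
    (hf : ∀ ξ ∈ lamOn {i : ℕ | 2 ≤ i}, ∀ η ∈ lamOn {i : ℕ | 3 ≤ i},
      ∀ ζ ∈ lamOn {i : ℕ | 3 ≤ i},
        f (wedge (e 1) ξ + wedge (e 2) η + ζ)
          = wedge (e 1) ξ + wedge (e 2) (η + D1 ξ) + ζ)
    (V : Set ℕ) (hV : V = {i : ℕ | 1 ≤ i}) :
    (∀ ω ∈ lamOn V, f (d0 ω) = d2 (f ω) ∧ f (d2 ω) = d0 (f ω)) ∧
    Set.BijOn ⇑f ↑(lamOn V ⊓ LinearMap.ker d0) ↑(lamOn V ⊓ LinearMap.ker d2) ∧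
    Set.BijOn ⇑f ↑(Submodule.map d0 (lamOn V)) ↑(Submodule.map d2 (lamOn V)) := by
  have memV : ∀ i : ℕ, 1 ≤ i → i ∈ V := fun i hi => by rw [hV]; exact hi
  have h1V : (1 : ℕ) ∈ V := memV 1 le_rfl
  have h2V : (2 : ℕ) ∈ V := memV 2 (by norm_num)
  have Vmem : ∀ i ∈ V, 1 ≤ i := fun i hi => by rw [hV] at hi; exact hi
  -- commutation of D1 with left wedge by e 1, e 2
  have hDW1 : ∀ z, D1 (wedge (e 1) z) = wedge (e 1) (D1 z) := fun z => by
    rw [hD, hD1, wedge_zero_left, zero_add]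
  have hDW2 : ∀ z, D1 (wedge (e 2) z) = wedge (e 2) (D1 z) := fun z => by
    rw [hD, hD2, wedge_zero_left, zero_add]
  -- D1 ∘ D1 has the derivation property (char 2)
  have derSq : ∀ x y, D1 (D1 (wedge x y)) = wedge (D1 (D1 x)) y + wedge x (D1 (D1 y)) :=
    fun x y => by rw [hD, map_add, hD, hD]; exact add_cancel_mid _ _ _
  -- values of D1 on generators
  have hD3 : ∀ i : ℕ, 3 ≤ i → D1 (e i) = e (i - 1) := hDi
  -- `d0 = e¹ ∧ D1 ·` on `lamOn V`
  have hd0eq : ∀ x ∈ lamOn V, d0 x = wedge (e 1) (D1 x) := by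
    refine lamDeriv_eqOn (D := ⇑d0) (D' := fun z => wedge (e 1) (D1 z)) (map_add d0)
      (fun x y => by show wedge (e 1) (D1 (x + y)) = _; rw [map_add, wedge_add_right]) hd0
      (fun x y => der_wedge_comp (j := 1) (g := ⇑D1) hD x y) ?_
    intro i hi
    show d0 (e i) = wedge (e 1) (D1 (e i))
    have hi1 : 1 ≤ i := Vmem i hi
    rcases Nat.lt_or_ge i 3 with h3 | h3
    · interval_cases i
      · rw [h01, hD1, wedge_zero_right]
      · rw [h02, hD2, wedge_zero_right]
    · rw [h0i i h3, hDi i h3]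
  -- `d2 = e¹ ∧ D1 · + e² ∧ D1² ·` on `lamOn V`
  have hd2eq : ∀ x ∈ lamOn V,
      d2 x = wedge (e 1) (D1 x) + wedge (e 2) (D1 (D1 x)) := by
    refine lamDeriv_eqOn (D := ⇑d2)
      (D' := fun z => wedge (e 1) (D1 z) + wedge (e 2) (D1 (D1 z))) (map_add d2)
      (fun x y => by
        show wedge (e 1) (D1 (x + y)) + wedge (e 2) (D1 (D1 (x + y))) = _
        simp only [map_add, wedge_add_right]; abel)
      hd2 (fun x y => der_add (g := fun z => wedge (e 1) (D1 z))
        (h := fun z => wedge (e 2) (D1 (D1 z)))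
        (fun x y => der_wedge_comp (j := 1) (g := ⇑D1) hD x y)
        (fun x y => der_wedge_comp (j := 2) (g := fun z => D1 (D1 z)) derSq x y) x y) ?_
    intro i hi
    show d2 (e i) = wedge (e 1) (D1 (e i)) + wedge (e 2) (D1 (D1 (e i)))
    rcases Nat.lt_or_ge i 5 with h5 | h5
    · have hi1 : 1 ≤ i := Vmem i hi
      interval_cases i
      · rw [h21, hD1, wedge_zero_right, map_zero, wedge_zero_right, add_zero]
      · rw [h22, hD2, wedge_zero_right, map_zero, wedge_zero_right, add_zero]
      · have e2 : D1 (e 3) = e 2 := hDi 3 le_rfl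
        rw [h23, e2, hD2, wedge_zero_right, add_zero]
      · have e3 : D1 (e 4) = e 3 := hDi 4 (by norm_num)
        have e2 : D1 (e 3) = e 2 := hDi 3 le_rfl
        rw [h24, e3, e2, wedge_e_e_self, add_zero]
    · have h3 : 3 ≤ i := by omega
      have h3' : 3 ≤ i - 1 := by omega
      rw [h2i i h5, hDi i h3, hDi (i - 1) h3', show i - 1 - 1 = i - 2 by omega]
  -- the explicit formula for f on lamOn V
  have hfeq : ∀ x ∈ lamOn V, f x = x + wedge (e 2) (D1 (iotaF x)) := by
    refine lamOn_induction ?_ ?_ ?_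
    · rw [map_zero, iota_zero, map_zero, wedge_zero_right, add_zero]
    · intro x y hx hy
      rw [map_add, hx, hy, iota_add, map_add, wedge_add_right]; abel
    · intro S hS
      have hSV : ∀ a ∈ S, 1 ≤ a := fun a ha => Vmem a (hS ha)
      by_cases h1 : (1 : ℕ) ∈ S
      · have hξ : Finsupp.single (S.erase 1) (1 : K2) ∈ lamOn {i : ℕ | 2 ≤ i} := by
          apply single_mem_lamOn
          intro a ha
          simp only [Finset.coe_erase, Set.mem_diff, Finset.mem_coe, Set.mem_singleton_iff] at ha
          have := hSV a ha.1
          show 2 ≤ a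
          omega
        have h0' : (0 : Lam) ∈ lamOn {i : ℕ | 3 ≤ i} := Submodule.zero_mem _
        have hfx := hf _ hξ 0 h0' 0 h0'
        simp only [wedge_zero_right, add_zero, zero_add] at hfx
        have hSw : wedge (e 1) (Finsupp.single (S.erase 1) (1 : K2))
            = Finsupp.single S (1 : K2) := by
          rw [← single_insert (Finset.notMem_erase 1 S), Finset.insert_erase h1]
        rw [hSw] at hfx
        rw [hfx, iota_single, if_pos h1]
      · by_cases h2 : (2 : ℕ) ∈ S
        · have hη : Finsupp.single (S.erase 2) (1 : K2) ∈ lamOn {i : ℕ | 3 ≤ i} := by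
            apply single_mem_lamOn
            intro a ha
            simp only [Finset.coe_erase, Set.mem_diff, Finset.mem_coe,
              Set.mem_singleton_iff] at ha
            have h1a : a ≠ 1 := fun h => h1 (h ▸ ha.1)
            have := hSV a ha.1
            show 3 ≤ a
            omega
          have h0' : (0 : Lam) ∈ lamOn {i : ℕ | 3 ≤ i} := Submodule.zero_mem _
          have h0'' : (0 : Lam) ∈ lamOn {i : ℕ | 2 ≤ i} := Submodule.zero_mem _
          have hfx := hf 0 h0'' _ hη 0 h0'
          simp only [wedge_zero_right, map_zero, zero_add, add_zero] at hfx
          have hSw : wedge (e 2) (Finsupp.single (S.erase 2) (1 : K2))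
              = Finsupp.single S (1 : K2) := by
            rw [← single_insert (Finset.notMem_erase 2 S), Finset.insert_erase h2]
          rw [hSw] at hfx
          rw [hfx, iota_single, if_neg h1, map_zero, wedge_zero_right, add_zero]
        · have hζ : Finsupp.single S (1 : K2) ∈ lamOn {i : ℕ | 3 ≤ i} := by
            apply single_mem_lamOn
            intro a ha
            have ha' : a ∈ S := by simpa using ha
            have h1a : a ≠ 1 := fun h => h1 (h ▸ ha')
            have h2a : a ≠ 2 := fun h => h2 (h ▸ ha')
            have := hSV a ha'
            show 3 ≤ a
            omega
          have h0' : (0 : Lam) ∈ lamOn {i : ℕ | 3 ≤ i} := Submodule.zero_mem _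
          have h0'' : (0 : Lam) ∈ lamOn {i : ℕ | 2 ≤ i} := Submodule.zero_mem _
          have hfx := hf 0 h0'' 0 h0' _ hζ
          simp only [wedge_zero_right, map_zero, zero_add, add_zero] at hfx
          rw [hfx, iota_single, if_neg h1, map_zero, wedge_zero_right, add_zero]
  -- closure properties
  have hD1mem : ∀ x ∈ lamOn V, D1 x ∈ lamOn V := by
    refine lamDeriv_memOn (map_add D1) hD ?_
    intro i hi
    rcases Nat.lt_or_ge i 3 with h3 | h3
    · have hi1 : 1 ≤ i := Vmem i hi
      interval_cases i
      · rw [hD1]; exact Submodule.zero_mem _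
      · rw [hD2]; exact Submodule.zero_mem _
    · rw [hDi i h3]; exact e_mem_lamOn (memV _ (by omega))
  have hiotaVmem : ∀ x ∈ lamOn V, iotaF x ∈ lamOn V := iota_memOn
  have he1 : e 1 ∈ lamOn V := e_mem_lamOn h1V
  have he2 : e 2 ∈ lamOn V := e_mem_lamOn h2V
  have hfmem : ∀ x ∈ lamOn V, f x ∈ lamOn V := fun x hx => by
    rw [hfeq x hx]
    exact Submodule.add_mem _ hx
      (wedge_mem_lamOn he2 (hD1mem _ (hiotaVmem _ hx)))
  have hd0mem : ∀ x ∈ lamOn V, d0 x ∈ lamOn V := fun x hx => by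
    rw [hd0eq x hx]; exact wedge_mem_lamOn he1 (hD1mem x hx)
  have hd2mem : ∀ x ∈ lamOn V, d2 x ∈ lamOn V := fun x hx => by
    rw [hd2eq x hx]
    exact Submodule.add_mem _ (wedge_mem_lamOn he1 (hD1mem x hx))
      (wedge_mem_lamOn he2 (hD1mem _ (hD1mem x hx)))
  -- D1 commutes with iota on lamOn V
  have hcomm : ∀ x ∈ lamOn V, D1 (iotaF x) = iotaF (D1 x) := by
    refine lamOn_induction ?_ ?_ ?_
    · rw [iota_zero, map_zero, iota_zero]
    · intro x y hx hy
      rw [iota_add, map_add, map_add, iota_add, hx, hy]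
    · intro S
      induction S using Finset.induction_on with
      | empty =>
        intro _
        rw [iota_single, if_neg (by simp), map_zero, lamDeriv_unit hD, iota_zero]
      | @insert i S hi ih =>
        intro hSI
        have hiV : i ∈ V := hSI (by simp)
        have hi1 : 1 ≤ i := Vmem i hiV
        have hSV : ↑S ⊆ V := fun a ha => hSI (by simp [ha])
        have ihS := ih hSV
        rw [single_insert hi]
        by_cases hone : i = 1
        · subst hone
          rw [iota_wedge_e1, map_add, hDW1, ihS, hDW1, iota_wedge_e1]
        · have hne : i ≠ 1 := hone
          rw [iota_wedge_ne hne, hD, hD, iota_add, ihS, iota_wedge_ne hne]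
          congr 1
          by_cases htwo : i = 2
          · subst htwo
            rw [hD2, wedge_zero_left, wedge_zero_left, iota_zero]
          · have h3 : 3 ≤ i := by omega
            rw [hDi i h3, iota_wedge_ne (by omega)]
  -- the two intertwining identities
  have key1 : ∀ x ∈ lamOn V, f (d0 x) = d2 (f x) := by
    intro x hx
    have hDx := hD1mem x hx
    have hix := hiotaVmem x hx
    have hDix := hD1mem _ hix
    -- left-hand side
    rw [hd0eq x hx, hfeq _ (wedge_mem_lamOn he1 hDx), iota_wedge_e1, map_add, hDW1,
      hcomm _ hDx, wedge_add_right]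
    -- right-hand side
    rw [hfeq x hx, hd2eq _ (Submodule.add_mem _ hx (wedge_mem_lamOn he2 hDix)),
      map_add D1 x, hDW2, hcomm x hx, hcomm _ hDx, wedge_add_right (e 1),
      map_add D1 (D1 x), hDW2, wedge_add_right (e 2), wedge_e_self, add_zero,
      wedge_left_comm (e 2) (e 1)]
    abel
  have key2 : ∀ x ∈ lamOn V, f (d2 x) = d0 (f x) := by
    intro x hx
    have hDx := hD1mem x hx
    have hDDx := hD1mem _ hDx
    have hix := hiotaVmem x hx
    have hDix := hD1mem _ hix
    -- left-hand side
    rw [hd2eq x hx, map_add f,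
      hfeq _ (wedge_mem_lamOn he1 hDx), hfeq _ (wedge_mem_lamOn he2 hDDx),
      iota_wedge_e1, iota_wedge_ne (by norm_num : (2:ℕ) ≠ 1),
      map_add D1 (D1 x), hDW1, hDW2, hcomm _ hDx, wedge_add_right (e 2) (D1 (D1 x)),
      wedge_e_self, add_zero]
    -- right-hand side
    rw [hfeq x hx, hd0eq _ (Submodule.add_mem _ hx (wedge_mem_lamOn he2 hDix)),
      map_add D1 x, hDW2, hcomm x hx, hcomm _ hDx, wedge_add_right (e 1),
      wedge_left_comm (e 2) (e 1)]
    abel_nf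
    congr 1
    rw [show ∀ b : Lam, (2 : ℤ) • b = b + b from fun b => two_zsmul b, lam_add_self, zero_add]
  -- f is an involution on lamOn V
  have hinv : ∀ x ∈ lamOn V, f (f x) = x := by
    intro x hx
    have hix := hiotaVmem x hx
    have hDix := hD1mem _ hix
    have hcV : wedge (e 2) (D1 (iotaF x)) ∈ lamOn V := wedge_mem_lamOn he2 hDix
    rw [hfeq x hx, map_add f, hfeq x hx, hfeq _ hcV,
      iota_wedge_ne (by norm_num : (2:ℕ) ≠ 1), hDW2, wedge_e_self, add_zero,
      add_assoc, lam_add_self, add_zero]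
  refine ⟨fun x hx => ⟨key1 x hx, key2 x hx⟩, ⟨?_, ?_, ?_⟩, ⟨?_, ?_, ?_⟩⟩
  · -- MapsTo for cocycles
    intro x hx
    simp only [SetLike.mem_coe, Submodule.mem_inf, LinearMap.mem_ker] at hx ⊢
    obtain ⟨hxV, hx0⟩ := hx
    exact ⟨hfmem x hxV, by rw [← key1 x hxV, hx0, map_zero]⟩
  · -- InjOn for cocycles
    intro x hx y hy hxy
    simp only [SetLike.mem_coe, Submodule.mem_inf] at hx hy
    calc x = f (f x) := (hinv x hx.1).symm
      _ = f (f y) := by rw [hxy]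
      _ = y := hinv y hy.1
  · -- SurjOn for cocycles
    intro y hy
    simp only [SetLike.mem_coe, Submodule.mem_inf, LinearMap.mem_ker] at hy
    obtain ⟨hyV, hy2⟩ := hy
    refine ⟨f y, ?_, hinv y hyV⟩
    simp only [Set.mem_setOf_eq, SetLike.mem_coe, Submodule.mem_inf, LinearMap.mem_ker]
    refine ⟨hfmem y hyV, ?_⟩
    show d0 (f y) = 0
    rw [← key2 y hyV, hy2, map_zero]
  · -- MapsTo for coboundaries
    intro y hy
    simp only [SetLike.mem_coe, Submodule.mem_map] at hy ⊢
    obtain ⟨x, hxV, rfl⟩ := hy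
    exact ⟨f x, hfmem x hxV, (key1 x hxV).symm⟩
  · -- InjOn for coboundaries
    intro x hx y hy hxy
    simp only [SetLike.mem_coe, Submodule.mem_map] at hx hy
    obtain ⟨a, haV, rfl⟩ := hx
    obtain ⟨b, hbV, rfl⟩ := hy
    calc d0 a = f (f (d0 a)) := (hinv _ (hd0mem a haV)).symm
      _ = f (f (d0 b)) := by rw [hxy]
      _ = d0 b := hinv _ (hd0mem b hbV)
  · -- SurjOn for coboundaries
    intro y hy
    simp only [SetLike.mem_coe, Submodule.mem_map] at hy
    obtain ⟨x, hxV, rfl⟩ := hy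
    refine ⟨d0 (f x), ?_, ?_⟩
    · simp only [Set.mem_setOf_eq, SetLike.mem_coe, Submodule.mem_map]
      exact ⟨f x, hfmem x hxV, rfl⟩
    · rw [key1 _ (hfmem x hxV), hinv x hxV]
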